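/- For the Arnoldi aggregation of size j, the approximated transient distributions satisfy Σ_{s=1}^n p̃_k(s) = 1 for all 0 ≤ k ≤ j−1, since p̃_k equals the true probability distribution p_k in these steps; in particular p̃_0 = p_0 even though π_0 = (‖p_0‖₂,0,...,0)^T is generally not a probability vector. -/
import Mathlib


open Matrix Finset

/-- Euclidean norm of a row vector. -/
noncomputable def norm2 {n : ℕ} (v : Fin n → ℝ) : ℝ := Real.sqrt (v ⬝ᵥ v)

/-- One Gram–Schmidt projection-subtraction step. -/
noncomputable def gsStep {n : ℕ} (r q : Fin n → ℝ) : Fin n → ℝ := r - (r ⬝ᵥ q) • q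

/-- List `[q_0, …, q_j]` of Arnoldi vectors after `j` expansion steps applied to `(v, M)`. -/
noncomputable def arnoldiList {n : ℕ} (v : Fin n → ℝ) (M : Matrix (Fin n) (Fin n) ℝ) :
    ℕ → List (Fin n → ℝ)
  | 0 => [(norm2 v)⁻¹ • v]
  | j + 1 =>
    let qs := arnoldiList v M j
    let r := qs.foldl gsStep (Matrix.vecMul (qs.getLastD 0) M)
    qs ++ [(norm2 r)⁻¹ • r]

/-- The Arnoldi vector `q_{i+1}` of the paper (0-indexed: `aQ v M i`). -/
noncomputable def aQ {n : ℕ} (v : Fin n → ℝ) (M : Matrix (Fin n) (Fin n) ℝ) (i : ℕ) :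
    Fin n → ℝ :=
  (arnoldiList v M i).getLastD 0

/-- Partial residual `r^{(i)}` in outer step `j` (0-indexed): `q_j M` minus the projections
onto `q_0, …, q_{i-1}`. -/
noncomputable def pres {n : ℕ} (v : Fin n → ℝ) (M : Matrix (Fin n) (Fin n) ℝ) (j i : ℕ) :
    Fin n → ℝ :=
  ((arnoldiList v M j).take i).foldl gsStep (Matrix.vecMul (aQ v M j) M)

/-- The Gram–Schmidt coefficient `h_{j,i}` (0-indexed in both arguments). -/
noncomputable def aH {n : ℕ} (v : Fin n → ℝ) (M : Matrix (Fin n) (Fin n) ℝ) (j i : ℕ) : ℝ :=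
  pres v M j i ⬝ᵥ aQ v M i

/-- The subdiagonal coefficient `h_{j, j+1} = ‖r_{j+1}‖₂` (0-indexed in `j`). -/
noncomputable def hsub {n : ℕ} (v : Fin n → ℝ) (M : Matrix (Fin n) (Fin n) ℝ) (j : ℕ) : ℝ :=
  norm2 (pres v M j (j + 1))

/-- The upper-Hessenberg matrix `H_j` produced by `j` Arnoldi steps. -/
noncomputable def arnoldiHmat {n : ℕ} (v : Fin n → ℝ) (M : Matrix (Fin n) (Fin n) ℝ) (j : ℕ) :
    Matrix (Fin j) (Fin j) ℝ := fun i l =>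
  if (l : ℕ) ≤ (i : ℕ) then aH v M i l
  else if (l : ℕ) = (i : ℕ) + 1 then hsub v M i else 0

/-- The matrix `Q_j` whose rows are the Arnoldi vectors `q_1, …, q_j` of the paper. -/
noncomputable def arnoldiQmat {n : ℕ} (v : Fin n → ℝ) (M : Matrix (Fin n) (Fin n) ℝ) (j : ℕ) :
    Matrix (Fin j) (Fin n) ℝ := fun i => aQ v M i

/-- The Krylov subspace `K^j(v, M) = span{v, vM, …, vM^{j-1}}` (of row vectors). -/
noncomputable def krylov {n : ℕ} (v : Fin n → ℝ) (M : Matrix (Fin n) (Fin n) ℝ) (j : ℕ) :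
    Submodule ℝ (Fin n → ℝ) :=
  Submodule.span ℝ (Set.range fun i : Fin j => Matrix.vecMul v (M ^ (i : ℕ)))

section Aux

variable {n : ℕ} (v : Fin n → ℝ) (M : Matrix (Fin n) (Fin n) ℝ)

lemma arnoldi_length (j : ℕ) : (arnoldiList v M j).length = j + 1 := by
  induction j with
  | zero => rfl
  | succ j ih => simp [arnoldiList, ih]

lemma arnoldi_succ (j : ℕ) :
    arnoldiList v M (j + 1) =
      arnoldiList v M j ++ [(norm2 (pres v M j (j + 1)))⁻¹ • pres v M j (j + 1)] := by
  have ht : (arnoldiList v M j).take (j + 1) = arnoldiList v M j :=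
    List.take_of_length_le (by rw [arnoldi_length])
  conv_lhs => rw [arnoldiList]
  simp only [pres, aQ, ht]

lemma aQ_succ (j : ℕ) :
    aQ v M (j + 1) = (norm2 (pres v M j (j + 1)))⁻¹ • pres v M j (j + 1) := by
  rw [aQ, arnoldi_succ]
  simp

lemma aQ_zero : aQ v M 0 = (norm2 v)⁻¹ • v := rfl

lemma arnoldi_take {i j : ℕ} (h : i ≤ j) :
    (arnoldiList v M j).take (i + 1) = arnoldiList v M i := by
  induction j with
  | zero =>
      have h0 : i = 0 := Nat.le_zero.mp h
      subst h0
      exact List.take_of_length_le (by rw [arnoldi_length])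
  | succ j ih =>
      rcases Nat.lt_or_ge i (j + 1) with h' | h'
      · rw [arnoldi_succ, List.take_append_of_le_length (by rw [arnoldi_length]; omega),
          ih (by omega)]
      · have h0 : i = j + 1 := le_antisymm h h'
        subst h0
        exact List.take_of_length_le (by rw [arnoldi_length])

lemma pres_zero (t : ℕ) : pres v M t 0 = Matrix.vecMul (aQ v M t) M := rfl

lemma pres_succ {m t : ℕ} (h : m ≤ t) :
    pres v M t (m + 1) = gsStep (pres v M t m) (aQ v M m) := by
  cases m with
  | zero =>
      rw [pres, arnoldi_take v M (Nat.zero_le t)]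
      rfl
  | succ m =>
      have h1 : pres v M t (m + 1 + 1) =
          List.foldl gsStep (Matrix.vecMul (aQ v M t) M) (arnoldiList v M (m + 1)) := by
        rw [pres, arnoldi_take v M h]
      have h2 : pres v M t (m + 1) =
          List.foldl gsStep (Matrix.vecMul (aQ v M t) M) (arnoldiList v M m) := by
        rw [pres, arnoldi_take v M (by omega : m ≤ t)]
      rw [h1, arnoldi_succ, List.foldl_append, ← h2, aQ_succ]
      rfl

lemma pres_eq {m t : ℕ} (h : m ≤ t + 1) :
    pres v M t m =
      Matrix.vecMul (aQ v M t) M - ∑ i ∈ Finset.range m, aH v M t i • aQ v M i := by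
  induction m with
  | zero => simp [pres_zero]
  | succ m ih =>
      rw [pres_succ v M (by omega), gsStep,
        show pres v M t m ⬝ᵥ aQ v M m = aH v M t m from rfl, ih (by omega),
        Finset.sum_range_succ]
      abel

lemma arnoldi_relation {t : ℕ} (ht : hsub v M t ≠ 0) :
    Matrix.vecMul (aQ v M t) M =
      (∑ i ∈ Finset.range (t + 1), aH v M t i • aQ v M i) +
        hsub v M t • aQ v M (t + 1) := by
  have hts : hsub v M t • aQ v M (t + 1) = pres v M t (t + 1) := by
    have hh : norm2 (pres v M t (t + 1)) = hsub v M t := rfl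
    rw [aQ_succ, hh, smul_smul, mul_inv_cancel₀ ht, one_smul]
  rw [hts, pres_eq v M (le_refl (t + 1))]
  abel

lemma vecMul_eq_sum' {m k : ℕ} (v : Fin m → ℝ) (A : Matrix (Fin m) (Fin k) ℝ) :
    Matrix.vecMul v A = ∑ i, v i • A i := by
  funext s
  simp [Matrix.vecMul, dotProduct, Finset.sum_apply, mul_comm]

lemma sum_vecMul' {m k : ℕ} (f : Fin m → (Fin k → ℝ)) (A : Matrix (Fin k) (Fin k) ℝ) :
    Matrix.vecMul (∑ i, f i) A = ∑ i, Matrix.vecMul (f i) A := by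
  funext s
  simp [Matrix.vecMul, dotProduct, Finset.sum_apply, Finset.sum_mul]
  rw [Finset.sum_comm]

end Aux

/-- for the Arnoldi aggregation of size `j`, the approximated transient
distributions sum to `1` for `0 ≤ k ≤ j-1`; in particular `p̃_0 = p_0`. -/
theorem arnoldi_aggregation_sums_to_one {n j : ℕ} (hj : 0 < j)
    (P : Matrix (Fin n) (Fin n) ℝ)
    (hPnn : ∀ i l, 0 ≤ P i l) (hProw : ∀ i, ∑ l, P i l = 1)
    (p₀ : Fin n → ℝ) (hp₀nn : ∀ s, 0 ≤ p₀ s) (hp₀sum : ∑ s, p₀ s = 1)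
    (hrun : ∀ i, i + 1 < j → hsub p₀ P i ≠ 0) :
    (∀ k : ℕ, k ≤ j - 1 →
      ∑ s,
        Matrix.vecMul
          (Matrix.vecMul (fun t : Fin j => if (t : ℕ) = 0 then norm2 p₀ else 0)
            ((arnoldiHmat p₀ P j) ^ k))
          (arnoldiQmat p₀ P j) s = 1) ∧
    Matrix.vecMul (fun t : Fin j => if (t : ℕ) = 0 then norm2 p₀ else 0)
      (arnoldiQmat p₀ P j) = p₀ := by
  set H := arnoldiHmat p₀ P j with hH
  set Q := arnoldiQmat p₀ P j with hQ
  set π0 : Fin j → ℝ := fun t => if (t : ℕ) = 0 then norm2 p₀ else 0 with hπ0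
  -- the Euclidean norm of p₀ is nonzero
  obtain ⟨s₀, hs₀⟩ : ∃ s, p₀ s ≠ 0 := by
    by_contra hcon
    push_neg at hcon
    simp [hcon] at hp₀sum
  have hdot : 0 < p₀ ⬝ᵥ p₀ := by
    rw [dotProduct]
    apply Finset.sum_pos'
    · intro i _
      exact mul_self_nonneg _
    · have h0 : 0 < p₀ s₀ := lt_of_le_of_ne (hp₀nn s₀) (Ne.symm hs₀)
      exact ⟨s₀, Finset.mem_univ _, mul_pos h0 h0⟩
  have hnorm : norm2 p₀ ≠ 0 := by
    have := Real.sqrt_pos.mpr hdot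
    rw [norm2]; positivity
  -- base case : π₀ᵀ Q = p₀
  have base : Matrix.vecMul π0 Q = p₀ := by
    funext s
    have hz : (⟨0, hj⟩ : Fin j) ∈ Finset.univ := Finset.mem_univ _
    rw [Matrix.vecMul, dotProduct]
    rw [Finset.sum_eq_single (⟨0, hj⟩ : Fin j)]
    · simp only [hπ0, hQ, arnoldiQmat, if_pos rfl]
      rw [aQ_zero, Pi.smul_apply, smul_eq_mul, ← mul_assoc, mul_inv_cancel₀ hnorm, one_mul]
    · intro b _ hb
      have : (b : ℕ) ≠ 0 := by
        intro hb0
        exact hb (Fin.ext hb0)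
      simp [hπ0, this]
    · intro h; exact absurd hz h
  -- support of π₀ Hᵏ
  have hsupp : ∀ k, ∀ t : Fin j, k < (t : ℕ) → Matrix.vecMul π0 (H ^ k) t = 0 := by
    intro k
    induction k with
    | zero =>
        intro t ht
        rw [pow_zero, Matrix.vecMul_one]
        simp only [hπ0]
        rw [if_neg (by omega)]
    | succ k ih =>
        intro t ht
        rw [pow_succ, ← Matrix.vecMul_vecMul, Matrix.vecMul, dotProduct]
        apply Finset.sum_eq_zero
        intro u _
        rcases Nat.lt_or_ge k (u : ℕ) with h' | h'
        · rw [ih u h', zero_mul]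
        · have hu : H u t = 0 := by
            simp only [hH, arnoldiHmat]
            rw [if_neg (by omega), if_neg (by omega)]
          rw [hu, mul_zero]
  -- row expansion of H·Q
  have row : ∀ t : Fin j, (t : ℕ) + 1 < j →
      Matrix.vecMul (H t) Q = Matrix.vecMul (aQ p₀ P (t : ℕ)) P := by
    intro t ht
    rw [vecMul_eq_sum', arnoldi_relation p₀ P (hrun t ht)]
    have hconv : ∀ l : Fin j, H t l • Q l =
        (fun i : ℕ => (if i ≤ (t : ℕ) then aH p₀ P t i
          else if i = (t : ℕ) + 1 then hsub p₀ P t else 0) • aQ p₀ P i) (l : ℕ) := by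
      intro l
      simp only [hH, hQ, arnoldiHmat, arnoldiQmat]
    calc ∑ l : Fin j, H t l • Q l
        = ∑ i ∈ Finset.range j, (if i ≤ (t : ℕ) then aH p₀ P t i
            else if i = (t : ℕ) + 1 then hsub p₀ P t else 0) • aQ p₀ P i := by
          rw [Finset.sum_congr rfl fun l _ => hconv l]
          exact Fin.sum_univ_eq_sum_range (fun i => (if i ≤ (t : ℕ) then aH p₀ P t i
            else if i = (t : ℕ) + 1 then hsub p₀ P t else 0) • aQ p₀ P i) j
      _ = ∑ i ∈ Finset.range ((t : ℕ) + 2), (if i ≤ (t : ℕ) then aH p₀ P t i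
            else if i = (t : ℕ) + 1 then hsub p₀ P t else 0) • aQ p₀ P i := by
          symm
          apply Finset.sum_subset (Finset.range_subset_range.mpr (by omega))
          intro x _ hx
          rw [Finset.mem_range, not_lt] at hx
          rw [if_neg (by omega), if_neg (by omega), zero_smul]
      _ = (∑ i ∈ Finset.range ((t : ℕ) + 1), aH p₀ P t i • aQ p₀ P i) +
            hsub p₀ P t • aQ p₀ P ((t : ℕ) + 1) := by
          rw [Finset.sum_range_succ, if_neg (by omega), if_pos rfl]
          congr 1
          apply Finset.sum_congr rfl
          intro x hx
          rw [Finset.mem_range] at hx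
          rw [if_pos (by omega)]
  -- exactness for k < j
  have hexact : ∀ k, k < j →
      Matrix.vecMul (Matrix.vecMul π0 (H ^ k)) Q = Matrix.vecMul p₀ (P ^ k) := by
    intro k
    induction k with
    | zero =>
        intro _
        rw [pow_zero, pow_zero, Matrix.vecMul_one, Matrix.vecMul_one, base]
    | succ k ih =>
        intro hk
        have hk' : k < j := by omega
        rw [pow_succ, ← Matrix.vecMul_vecMul, Matrix.vecMul_vecMul (Matrix.vecMul π0 (H ^ k)) H Q]
        set w := Matrix.vecMul π0 (H ^ k) with hw
        have step1 : Matrix.vecMul w (H * Q) = ∑ t : Fin j, w t • Matrix.vecMul (H t) Q := by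
          rw [vecMul_eq_sum']
          apply Finset.sum_congr rfl
          intro t _
          congr 1
        rw [step1]
        have step2 : ∀ t : Fin j, w t • Matrix.vecMul (H t) Q
            = w t • Matrix.vecMul (aQ p₀ P (t : ℕ)) P := by
          intro t
          rcases eq_or_ne (w t) 0 with h0 | h0
          · rw [h0, zero_smul, zero_smul]
          · have htk : (t : ℕ) ≤ k := by
              by_contra hcon
              exact h0 (hsupp k t (by omega))
            rw [row t (by omega)]
        rw [Finset.sum_congr rfl fun t _ => step2 t]
        have step3 : ∑ t : Fin j, w t • Matrix.vecMul (aQ p₀ P (t : ℕ)) P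
            = Matrix.vecMul (∑ t : Fin j, w t • aQ p₀ P (t : ℕ)) P := by
          rw [sum_vecMul']
          apply Finset.sum_congr rfl
          intro t _
          rw [Matrix.smul_vecMul]
        rw [step3, show (∑ t : Fin j, w t • aQ p₀ P (t : ℕ)) = Matrix.vecMul w Q by
            rw [vecMul_eq_sum']
            rfl, hw, ih hk', Matrix.vecMul_vecMul, ← pow_succ]
  -- row sums are preserved by the stochastic matrix P
  have hsum : ∀ k : ℕ, ∑ s, Matrix.vecMul p₀ (P ^ k) s = 1 := by
    intro k
    induction k with
    | zero => simpa [Matrix.vecMul_one] using hp₀sum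
    | succ k ih =>
        rw [pow_succ, ← Matrix.vecMul_vecMul]
        set w := Matrix.vecMul p₀ (P ^ k) with hw
        calc ∑ s, Matrix.vecMul w P s = ∑ s, ∑ i, w i * P i s := by
              apply Finset.sum_congr rfl
              intro s _
              rw [Matrix.vecMul, dotProduct]
          _ = ∑ i, w i * ∑ s, P i s := by
              rw [Finset.sum_comm]
              simp [Finset.mul_sum]
          _ = ∑ i, w i := by
              apply Finset.sum_congr rfl
              intro i _
              rw [hProw i, mul_one]
          _ = 1 := ih
  refine ⟨?_, base⟩
  intro k hk
  rw [hexact k (by omega), hsum k]
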